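/- Let ψ be C¹ and strictly increasing on [0,∞) with 0 < ψ(x) < v* for x > 0, and let H be strictly concave, increasing with H(0)=0. Fix s ≥ 1 and ε(t) = ε e^{−σ(t−T)} ∈ (0,1). Then (1 − ε(t)) H(ψ(s)) − H((1 − ε(t)) ψ(s)) ≤ (1 − ε(t)) ε(t) ψ(s)² C_ψ, where C_ψ = max_{z ∈ [ψ(1)/2, v*]} (H(z)/z)' < 0, provided (1 − ε(t)) ψ(s) ≥ ψ(1)/2. -/

import Mathlib

/-- Concavity estimate for the lower solution of Lemma 3.2: with
`C_ψ = max_{z ∈ [ψ(1)/2, v*]} (H(z)/z)' < 0`, for `s ≥ 1` and `e ∈ (0,1)` with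
`(1−e)ψ(s) ≥ ψ(1)/2`, one has
`(1−e) H(ψ(s)) − H((1−e)ψ(s)) ≤ (1−e) e ψ(s)² C_ψ`. -/
theorem stmt19 (vstar s e : ℝ) (H H' ψ ψ' : ℝ → ℝ)
    (hv : 0 < vstar)
    (hψd : ∀ x, 0 ≤ x → HasDerivAt ψ (ψ' x) x)
    (hψmono : StrictMonoOn ψ (Set.Ici 0))
    (hψrange : ∀ x, 0 < x → 0 < ψ x ∧ ψ x < vstar)
    (hHd : ∀ x, HasDerivAt H (H' x) x)
    (hH0 : H 0 = 0)
    (hHmono : StrictMonoOn H (Set.Ici 0))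
    (hHconc : StrictConcaveOn ℝ (Set.Ici 0) H)
    (hHC2 : ContDiffOn ℝ 2 H (Set.Ici 0))
    (hs : 1 ≤ s) (he : e ∈ Set.Ioo (0:ℝ) 1)
    (hlb : ψ 1 / 2 ≤ (1 - e) * ψ s) :
    sSup ((fun z => deriv (fun y => H y / y) z) '' Set.Icc (ψ 1 / 2) vstar) < 0 ∧
      (1 - e) * H (ψ s) - H ((1 - e) * ψ s) ≤
        (1 - e) * e * (ψ s) ^ 2 *
          sSup ((fun z => deriv (fun y => H y / y) z) '' Set.Icc (ψ 1 / 2) vstar) := by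
  obtain ⟨he0, he1⟩ := he
  set g : ℝ → ℝ := fun y => H y / y with hg
  have hψ1 : 0 < ψ 1 := (hψrange 1 one_pos).1
  have ht0 : 0 < ψ 1 / 2 := by linarith
  have hψs : 0 < ψ s := (hψrange s (by linarith)).1
  have hψsv : ψ s < vstar := (hψrange s (by linarith)).2
  -- g has derivative (H' z * z - H z)/z^2 at any z ≠ 0
  have hgd : ∀ z : ℝ, z ≠ 0 → HasDerivAt g ((H' z * z - H z) / z ^ 2) z := by
    intro z hz
    rw [show g = H / id from rfl]
    simpa using (hHd z).div (hasDerivAt_id z) hz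
  have hderiv : ∀ z : ℝ, z ≠ 0 → deriv g z = (H' z * z - H z) / z ^ 2 := fun z hz =>
    (hgd z hz).deriv
  -- pointwise negativity of deriv g on (0, ∞)
  have hneg : ∀ z : ℝ, 0 < z → deriv g z < 0 := by
    intro z hz
    have hslope : H' z < slope H 0 z :=
      hHconc.lt_slope_of_hasDerivAt (Set.self_mem_Ici) hz.le hz (hHd z)
    have hslope' : slope H 0 z = H z / z := by
      simp [slope_def_field, hH0]
    rw [hderiv z hz.ne']
    apply div_neg_of_neg_of_pos _ (by positivity)
    have : H' z * z < H z := by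
      have := hslope
      rw [hslope'] at this
      calc H' z * z < (H z / z) * z := by nlinarith
        _ = H z := by field_simp
    linarith
  -- continuity of deriv g on Icc (ψ 1 / 2) vstar
  have hH'cont : ∀ z : ℝ, 0 < z → ContinuousAt H' z := by
    intro z hz
    have hmem : Set.Ici (0:ℝ) ∈ nhds z := Ici_mem_nhds hz
    have h2 : ContDiffAt ℝ 2 H z := hHC2.contDiffAt hmem
    have hfd : ContDiffAt ℝ 1 (fderiv ℝ H) z := h2.fderiv_right (by norm_num)
    have hcd : ContinuousAt (fun w => fderiv ℝ H w 1) z :=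
      (ContinuousLinearMap.apply ℝ ℝ (1:ℝ)).continuous.continuousAt.comp hfd.continuousAt
    have heq : H' = fun w => fderiv ℝ H w 1 := funext fun x => by
      rw [fderiv_apply_one_eq_deriv]; exact ((hHd x).deriv).symm
    rw [heq]; exact hcd
  have hgc : ContinuousOn (fun z => deriv g z) (Set.Icc (ψ 1 / 2) vstar) := by
    intro z hzmem
    have hz : 0 < z := lt_of_lt_of_le ht0 hzmem.1
    apply ContinuousAt.continuousWithinAt
    have hca : ContinuousAt (fun w => (H' w * w - H w) / w ^ 2) z := by
      have hH : ContinuousAt H z := (hHd z).continuousAt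
      exact (((hH'cont z hz).mul continuousAt_id).sub hH).div (by fun_prop) (by positivity)
    apply hca.congr
    filter_upwards [eventually_gt_nhds hz] with w hw
    exact (hderiv w hw.ne').symm
  -- compactness: sup attained
  have hK : IsCompact (Set.Icc (ψ 1 / 2) vstar) := isCompact_Icc
  have hne : (Set.Icc (ψ 1 / 2) vstar).Nonempty := by
    refine ⟨ψ 1 / 2, le_rfl, ?_⟩
    have := (hψrange 1 one_pos).2
    linarith
  obtain ⟨x0, hx0mem, hx0max⟩ := hK.exists_isMaxOn hne hgc
  have hsup_eq : sSup ((fun z => deriv g z) '' Set.Icc (ψ 1 / 2) vstar) = deriv g x0 := by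
    apply IsGreatest.csSup_eq
    exact ⟨Set.mem_image_of_mem _ hx0mem, by rintro _ ⟨y, hy, rfl⟩; exact hx0max hy⟩
  have hbdd : BddAbove ((fun z => deriv g z) '' Set.Icc (ψ 1 / 2) vstar) :=
    (hK.image_of_continuousOn hgc).bddAbove
  have hsupneg : sSup ((fun z => deriv g z) '' Set.Icc (ψ 1 / 2) vstar) < 0 := by
    rw [hsup_eq]; exact hneg x0 (lt_of_lt_of_le ht0 hx0mem.1)
  refine ⟨hsupneg, ?_⟩
  -- MVT on [a, b]
  set a := (1 - e) * ψ s with ha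
  set b := ψ s with hb
  have ha0 : 0 < a := lt_of_lt_of_le ht0 hlb
  have hab : a < b := by
    have : a = (1 - e) * b := rfl
    nlinarith
  have hgdiff : ∀ x ∈ Set.Ioo a b, HasDerivAt g (deriv g x) x := by
    intro x hx
    have hx0 : 0 < x := lt_trans ha0 hx.1
    have := hgd x hx0.ne'
    rwa [hderiv x hx0.ne']
  have hgcont : ContinuousOn g (Set.Icc a b) := by
    intro x hx
    exact ((hgd x (lt_of_lt_of_le ha0 hx.1).ne').continuousAt).continuousWithinAt
  obtain ⟨c, hcmem, hc⟩ := exists_hasDerivAt_eq_slope g (fun z => deriv g z) hab hgcont hgdiff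
  have hc0 : 0 < c := lt_trans ha0 hcmem.1
  have hcK : c ∈ Set.Icc (ψ 1 / 2) vstar :=
    ⟨le_trans hlb hcmem.1.le, le_trans hcmem.2.le (le_of_lt hψsv)⟩
  have hcle : deriv g c ≤ sSup ((fun z => deriv g z) '' Set.Icc (ψ 1 / 2) vstar) :=
    le_csSup hbdd (Set.mem_image_of_mem _ hcK)
  -- rewrite LHS
  have hb0 : b ≠ 0 := hψs.ne'
  have hlhs : (1 - e) * H b - H a = a * (g b - g a) := by
    have h1 : a * g b = (1 - e) * H b := by
      rw [hg]; field_simp [ha]; ring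
    have h2 : a * g a = H a := by
      rw [hg]; field_simp
    rw [mul_sub, h1, h2]
  have hdiff : g b - g a = deriv g c * (e * b) := by
    have hba : b - a = e * b := by rw [ha]; ring
    have hba0 : b - a ≠ 0 := sub_ne_zero.mpr hab.ne'
    have := (div_eq_iff hba0).mp hc.symm
    rw [← hba]; linarith
  calc (1 - e) * H b - H a = a * (deriv g c * (e * b)) := by rw [hlhs, hdiff]
    _ = (1 - e) * e * b ^ 2 * deriv g c := by rw [ha]; ring
    _ ≤ (1 - e) * e * b ^ 2 * sSup ((fun z => deriv g z) '' Set.Icc (ψ 1 / 2) vstar) := by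
        apply mul_le_mul_of_nonneg_left hcle
        exact mul_nonneg (mul_nonneg (by linarith) he0.le) (sq_nonneg b)
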